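/- The sequence W(n) · √n · √(π/e) · (1 − 1/(2(n+1/3)))^{−(n+1/3)} converges to 1 as n → ∞. -/

import Mathlib

open Real Filter Topology

/-- The Wallis ratio W(n) = (2n-1)!!/(2n)!!. -/
noncomputable def W (n : ℕ) : ℝ :=
  (∏ k ∈ Finset.range n, (2 * (k : ℝ) + 1)) / (∏ k ∈ Finset.range n, (2 * (k : ℝ) + 2))

lemma W_nonneg (n : ℕ) : 0 ≤ W n := by
  unfold W
  apply div_nonneg <;> exact Finset.prod_nonneg fun k _ => by positivity

lemma W_succ (n : ℕ) : W (n + 1) = W n * ((2 * n + 1) / (2 * n + 2)) := by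
  unfold W
  rw [Finset.prod_range_succ, Finset.prod_range_succ, div_mul_div_comm]

lemma key (n : ℕ) : Real.Wallis.W n * (W n) ^ 2 * (2 * (n : ℝ) + 1) = 1 := by
  induction n with
  | zero => simp [Real.Wallis.W, W]
  | succ n ih =>
    rw [Real.Wallis.W_succ, W_succ]
    have h1 : (2 * (n : ℝ) + 1) ≠ 0 := by positivity
    have h2 : (2 * (n : ℝ) + 2) ≠ 0 := by positivity
    have h3 : (2 * (n : ℝ) + 3) ≠ 0 := by positivity
    push_cast
    field_simp
    linear_combination (2*(n:ℝ)+3) * ih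

lemma tendsto_sq : Tendsto (fun n : ℕ => (W n) ^ 2 * (2 * (n : ℝ) + 1)) atTop (𝓝 (2 / π)) := by
  have h : ∀ n : ℕ, (W n) ^ 2 * (2 * (n : ℝ) + 1) = (Real.Wallis.W n)⁻¹ := by
    intro n
    have hW := Real.Wallis.W_pos n
    field_simp
    have := key n
    linarith [key n]
  simp_rw [h]
  have := (Real.Wallis.tendsto_W_nhds_pi_div_two).inv₀ (by positivity : (π / 2 : ℝ) ≠ 0)
  convert this using 2
  rw [inv_div]

lemma tendsto_aux : Tendsto (fun n : ℕ => ((n : ℝ)) / (2 * (n : ℝ) + 1)) atTop (𝓝 (1 / 2)) := by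
  have h : ∀ n : ℕ, ((n : ℝ)) / (2 * (n : ℝ) + 1) = 1 / 2 - (1 / 2) / (2 * (n : ℝ) + 1) := by
    intro n
    have : (2 * (n : ℝ) + 1) ≠ 0 := by positivity
    field_simp
    ring
  simp_rw [h]
  have h2 : Tendsto (fun n : ℕ => (2 * (n : ℝ) + 1)) atTop atTop := by
    apply Tendsto.atTop_add _ tendsto_const_nhds
    exact tendsto_natCast_atTop_atTop.const_mul_atTop two_pos
  have := (tendsto_const_nhds (x := (1/2 : ℝ)) (f := atTop (α := ℕ))).div_atTop h2
  simpa using tendsto_const_nhds.sub this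

lemma tendstoA : Tendsto (fun n : ℕ => W n * Real.sqrt n) atTop (𝓝 (Real.sqrt (1 / π))) := by
  have h : Tendsto (fun n : ℕ => (W n) ^ 2 * (n : ℝ)) atTop (𝓝 (1 / π)) := by
    have heq : ∀ n : ℕ, (W n) ^ 2 * (n : ℝ)
        = ((W n) ^ 2 * (2 * (n : ℝ) + 1)) * ((n : ℝ) / (2 * (n : ℝ) + 1)) := by
      intro n
      have : (2 * (n : ℝ) + 1) ≠ 0 := by positivity
      field_simp
    simp_rw [heq]
    have := tendsto_sq.mul tendsto_aux
    convert this using 2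
    ring
  have h2 := (Real.continuous_sqrt.tendsto _).comp h
  convert h2 using 2 with n
  simp only [Function.comp]
  rw [Real.sqrt_mul (sq_nonneg _), Real.sqrt_sq (W_nonneg n)]

lemma tendstoB : Tendsto (fun n : ℕ =>
    (1 - 1 / (2 * ((n : ℝ) + 1 / 3))) ^ (-(((n : ℝ) + 1 / 3)) : ℝ)) atTop (𝓝 (Real.exp (1 / 2))) := by
  have hx : Tendsto (fun n : ℕ => (n : ℝ) + 1 / 3) atTop atTop :=
    tendsto_atTop_add_const_right _ _ tendsto_natCast_atTop_atTop
  have h := (tendsto_one_add_div_rpow_exp (-(1/2) : ℝ)).comp hx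
  have h' : Tendsto (fun n : ℕ => (1 - 1 / (2 * ((n : ℝ) + 1 / 3))) ^ (((n : ℝ) + 1 / 3) : ℝ))
      atTop (𝓝 (Real.exp (-(1/2)))) := by
    refine h.congr fun n => ?_
    simp only [Function.comp]
    congr 1
    have : ((n : ℝ) + 1 / 3) ≠ 0 := by positivity
    field_simp
    ring
  have h2 := h'.inv₀ (Real.exp_ne_zero _)
  rw [← Real.exp_neg, neg_neg] at h2
  refine h2.congr' ?_
  filter_upwards [eventually_ge_atTop 1] with n hn
  have hn' : (1 : ℝ) ≤ (n : ℝ) := by exact_mod_cast hn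
  have hb : (0 : ℝ) ≤ 1 - 1 / (2 * ((n : ℝ) + 1 / 3)) := by
    have h1 : (2 : ℝ) ≤ 2 * ((n : ℝ) + 1 / 3) := by nlinarith
    have : 1 / (2 * ((n : ℝ) + 1 / 3)) ≤ 1 / 2 := by
      apply one_div_le_one_div_of_le <;> linarith
    linarith
  rw [Real.rpow_neg hb]

theorem wallis_asymptotic :
    Tendsto (fun n : ℕ =>
        W n * Real.sqrt n * Real.sqrt (π / Real.exp 1) *
          (1 - 1 / (2 * ((n : ℝ) + 1 / 3))) ^ (-(((n : ℝ) + 1 / 3)) : ℝ))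
      atTop (nhds 1) := by
  have h := ((tendstoA.mul_const (Real.sqrt (π / Real.exp 1))).mul tendstoB)
  have heq : Real.sqrt (1 / π) * Real.sqrt (π / Real.exp 1) * Real.exp (1 / 2) = 1 := by
    rw [← Real.sqrt_mul (by positivity)]
    have : (1 / π) * (π / Real.exp 1) = (Real.exp 1)⁻¹ := by
      have := Real.pi_pos
      field_simp
    rw [this, Real.exp_half, ← Real.sqrt_mul (by positivity),
      inv_mul_cancel₀ (Real.exp_ne_zero 1), Real.sqrt_one]
  rw [heq] at h
  exact h
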